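/- Let n ≥ 3, K ≥ 1, ε > 0, and 0 < s ≤ n−2. Let (f, g) be a K-cinematic pair of maps ℝ^{n−2} → ℝ^{n−1} on [0,1]^{n−2}, set d := ‖f − g‖_{C²([0,1]^{n−2})}, and let δ satisfy 0 < δ ≤ d. Let X ⊂ [0,1]^{n−2} be a finite (δ, s, δ^{−ε})-set with #X ≤ δ^{−s}, and define P_{f,g} := {x ∈ [0,1]^{n−2} : |f(x) − g(x)| < 2δ}. Then the set X^δ ∩ P_{f,g}, where X^δ := {p : dist(p, X) < δ}, can be covered by at most C(n,K) · δ^{−ε} · d^{−s} balls of radius δ, where C(n,K) depends only on n and K. -/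

import Mathlib

open MeasureTheory Set
open scoped ENNReal NNReal

/-- The unit cube `[0,1]^m` in `ℝ^m`. -/
def unitCube (m : ℕ) : Set (EuclideanSpace ℝ (Fin m)) :=
  {x | ∀ i, x i ∈ Set.Icc (0:ℝ) 1}

/-- The `C²` norm of a map on a subset: `sup_{x ∈ D} max(|h x|, ‖Dh x‖, ‖D²h x‖)`. -/
noncomputable def C2NormOn {m l : ℕ}
    (h : EuclideanSpace ℝ (Fin m) → EuclideanSpace ℝ (Fin l))
    (D : Set (EuclideanSpace ℝ (Fin m))) : ℝ :=
  ⨆ x ∈ D, max ‖h x‖ (max ‖fderiv ℝ h x‖ ‖fderiv ℝ (fderiv ℝ h) x‖)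

/-- A `K`-cinematic pair of maps on `[0,1]^m`. -/
def CinematicPair {m l : ℕ} (K : ℝ)
    (f g : EuclideanSpace ℝ (Fin m) → EuclideanSpace ℝ (Fin l)) : Prop :=
  ContDiff ℝ 2 f ∧ ContDiff ℝ 2 g ∧
  C2NormOn f (unitCube m) ≤ K ∧ C2NormOn g (unitCube m) ≤ K ∧
  ∀ x ∈ unitCube m, ∀ ξ : EuclideanSpace ℝ (Fin m), ‖ξ‖ = 1 →
    K⁻¹ * C2NormOn (f - g) (unitCube m) ≤ ‖f x - g x‖ + ‖fderiv ℝ f x ξ - fderiv ℝ g x ξ‖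

/-- The vertical `η`-neighbourhood of the graph of `f` over `D`. -/
def vertNbhd {m l : ℕ} (f : EuclideanSpace ℝ (Fin m) → EuclideanSpace ℝ (Fin l))
    (D : Set (EuclideanSpace ℝ (Fin m))) (η : ℝ) :
    Set (EuclideanSpace ℝ (Fin m) × EuclideanSpace ℝ (Fin l)) :=
  {p | p.1 ∈ D ∧ ‖p.2 - f p.1‖ < η}

/-- A finite `(δ, s, C)`-set in a metric space: every ball of radius `r ≥ δ` contains at
most `C · r^s · #A` points of `A`. -/
def IsDeltaSet {α : Type*} [PseudoMetricSpace α] (δ s C : ℝ) (A : Set α) : Prop :=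
  ∀ (x : α) (r : ℝ), δ ≤ r →
    ((A ∩ Metric.closedBall x r).ncard : ℝ) ≤ C * r ^ s * A.ncard

section aux
variable {m l : ℕ}

lemma convex_unitCube : Convex ℝ (unitCube m) := by
  intro x hx y hy a b ha hb hab i
  have h := convex_Icc (0:ℝ) 1 (hx i) (hy i) ha hb hab
  simpa [PiLp.add_apply, PiLp.smul_apply, smul_eq_mul] using h

lemma isCompact_unitCube : IsCompact (unitCube m) := by
  apply Metric.isCompact_of_isClosed_isBounded
  · have : unitCube m = ⋂ i, (fun x : EuclideanSpace ℝ (Fin m) => x i) ⁻¹' Icc (0:ℝ) 1 := by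
      ext x; simp [unitCube]
    rw [this]
    exact isClosed_iInter fun i => isClosed_Icc.preimage (EuclideanSpace.proj i).continuous
  · apply (Metric.isBounded_closedBall (x := (0 : EuclideanSpace ℝ (Fin m)))
      (r := Real.sqrt m)).subset
    intro x hx
    simp only [Metric.mem_closedBall, dist_zero_right]
    rw [EuclideanSpace.norm_eq]
    have hsum : ∑ i, ‖x i‖ ^ 2 ≤ (m : ℝ) := by
      calc ∑ i, ‖x i‖ ^ 2 ≤ ∑ _i : Fin m, (1:ℝ) := by
            apply Finset.sum_le_sum
            intro i _
            have h1 := (hx i).1; have h2 := (hx i).2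
            have hle : ‖x i‖ ≤ 1 := by
              rw [Real.norm_eq_abs, abs_le]; constructor <;> linarith
            nlinarith [norm_nonneg (x i)]
        _ = (m : ℝ) := by simp
    exact Real.sqrt_le_sqrt hsum

lemma c2fun_continuous (u : EuclideanSpace ℝ (Fin m) → EuclideanSpace ℝ (Fin l))
    (hu : ContDiff ℝ 2 u) :
    Continuous fun x => max ‖u x‖ (max ‖fderiv ℝ u x‖ ‖fderiv ℝ (fderiv ℝ u) x‖) := by
  have h1 : Continuous u := hu.continuous
  have h2 : ContDiff ℝ 1 (fderiv ℝ u) := hu.fderiv_right (m := 1) (by norm_num)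
  have h3 : Continuous (fderiv ℝ (fderiv ℝ u)) :=
    (h2.fderiv_right (m := 0) (by norm_num)).continuous
  exact h1.norm.max ((h2.continuous.norm).max (Continuous.norm (f := fderiv ℝ (fderiv ℝ u)) h3))

lemma le_c2NormOn (u : EuclideanSpace ℝ (Fin m) → EuclideanSpace ℝ (Fin l))
    (hu : ContDiff ℝ 2 u) {x : EuclideanSpace ℝ (Fin m)} (hx : x ∈ unitCube m) :
    max ‖u x‖ (max ‖fderiv ℝ u x‖ ‖fderiv ℝ (fderiv ℝ u) x‖) ≤ C2NormOn u (unitCube m) := by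
  set F := fun x : EuclideanSpace ℝ (Fin m) =>
    max ‖u x‖ (max ‖fderiv ℝ u x‖ ‖fderiv ℝ (fderiv ℝ u) x‖) with hF
  obtain ⟨M, hM⟩ : ∃ M, ∀ y ∈ unitCube m, F y ≤ M := by
    obtain ⟨M, hM⟩ := (isCompact_unitCube.bddAbove_image
      ((c2fun_continuous u hu).continuousOn (s := unitCube m)))
    exact ⟨M, fun y hy => hM ⟨y, hy, rfl⟩⟩
  have hbdd : BddAbove (Set.range fun y : EuclideanSpace ℝ (Fin m) =>
      ⨆ _ : y ∈ unitCube m, F y) := by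
    refine ⟨max M 0, ?_⟩
    rintro _ ⟨y, rfl⟩
    show (⨆ _ : y ∈ unitCube m, F y) ≤ max M 0
    by_cases hy : y ∈ unitCube m
    · rw [ciSup_pos hy]; exact le_max_of_le_left (hM y hy)
    · exact Real.iSup_le (fun h => (hy h).elim) (le_max_right M 0)
  have h := le_ciSup hbdd x
  rw [ciSup_pos hx] at h
  exact h

lemma c2NormOn_le (u : EuclideanSpace ℝ (Fin m) → EuclideanSpace ℝ (Fin l)) {M : ℝ}
    (hM : 0 ≤ M)
    (h : ∀ x ∈ unitCube m, max ‖u x‖ (max ‖fderiv ℝ u x‖ ‖fderiv ℝ (fderiv ℝ u) x‖) ≤ M) :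
    C2NormOn u (unitCube m) ≤ M :=
  Real.iSup_le (fun x => Real.iSup_le (fun hx => h x hx) hM) hM

lemma inv_le_mul_inv_aux {a b C : ℝ} (ha : 0 < a) (hb : 0 < b) (h : b ≤ C * a) :
    a⁻¹ ≤ C * b⁻¹ := by
  rw [inv_eq_one_div, inv_eq_one_div, mul_one_div, div_le_div_iff₀ ha hb]
  linarith

end aux

set_option maxHeartbeats 2000000 in
/-- For a `K`-cinematic pair `(f,g)` with `d = ‖f−g‖_{C²}`, `0 < δ ≤ d`,
and a finite `(δ,s,δ^{−ε})`-set `X ⊆ [0,1]^{n−2}` with `#X ≤ δ^{−s}`, the set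
`X^δ ∩ {x ∈ [0,1]^{n−2} : |f(x) − g(x)| < 2δ}` can be covered by at most
`C(n,K) δ^{−ε} d^{−s}` balls of radius `δ`. -/
theorem stmt10 (n : ℕ) (hn : 3 ≤ n) (K : ℝ) (hK : 1 ≤ K) :
    ∃ C : ℝ, 0 < C ∧
      ∀ ε s : ℝ, 0 < ε → 0 < s → s ≤ (n : ℝ) - 2 →
      ∀ f g : EuclideanSpace ℝ (Fin (n-2)) → EuclideanSpace ℝ (Fin (n-1)),
        CinematicPair K f g →
        ∀ δ : ℝ, 0 < δ → δ ≤ C2NormOn (f - g) (unitCube (n-2)) →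
        ∀ X : Set (EuclideanSpace ℝ (Fin (n-2))), X.Finite → X ⊆ unitCube (n-2) →
          IsDeltaSet δ s (δ ^ (-ε)) X → (X.ncard : ℝ) ≤ δ ^ (-s) →
          ∃ F : Finset (EuclideanSpace ℝ (Fin (n-2))),
            (F.card : ℝ) ≤ C * δ ^ (-ε) * C2NormOn (f - g) (unitCube (n-2)) ^ (-s) ∧
            {p | ∃ x ∈ X, dist p x < δ} ∩
                {x ∈ unitCube (n-2) | ‖f x - g x‖ < 2 * δ}
              ⊆ ⋃ p ∈ F, Metric.ball p δ := by
  classical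
  have hK0 : (0:ℝ) < K := lt_of_lt_of_le one_pos hK
  obtain ⟨t0, ht0fin, ht0⟩ :
      ∃ t : Set (EuclideanSpace ℝ (Fin (n-2))), t.Finite ∧
        unitCube (n-2) ⊆ ⋃ y ∈ t, Metric.ball y (1/(8*K)) := by
    have h := (isCompact_unitCube (m := n-2)).totallyBounded
    rw [Metric.totallyBounded_iff] at h
    exact h _ (by positivity)
  set T : Finset (EuclideanSpace ℝ (Fin (n-2))) := ht0fin.toFinset with hT
  set c₁ : ℝ := 2 + 2*K with hc₁
  set B : ℝ := 32*K^2*c₁ with hBdef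
  have hc₁1 : (1:ℝ) ≤ c₁ := by nlinarith
  have hc₁0 : (0:ℝ) < c₁ := by linarith
  have hB1 : (1:ℝ) ≤ B := by nlinarith
  have hB0 : (0:ℝ) < B := by linarith
  refine ⟨((T.card : ℝ) + 1) * B ^ ((n:ℝ) - 2), by positivity, ?_⟩
  intro ε s hε hs hsn f g hcin δ hδ hδd X hXfin hXcube hXds hXcard
  set d := C2NormOn (f - g) (unitCube (n-2)) with hd
  have hd0 : 0 < d := lt_of_lt_of_le hδ hδd
  obtain ⟨hfc, hgc, hfK, hgK, hcinq⟩ := hcin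
  have hhc : ContDiff ℝ 2 (f - g) := hfc.sub hgc
  have hfd : Differentiable ℝ f := hfc.differentiable (by norm_num)
  have hgd : Differentiable ℝ g := hgc.differentiable (by norm_num)
  have hhd : Differentiable ℝ (f - g) := hhc.differentiable (by norm_num)
  have hDdiff : Differentiable ℝ (fderiv ℝ (f - g)) :=
    (hhc.fderiv_right (m := 1) (by norm_num)).differentiable (by norm_num)
  have hDfd : Differentiable ℝ (fderiv ℝ f) :=
    (hfc.fderiv_right (m := 1) (by norm_num)).differentiable (by norm_num)
  have hDgd : Differentiable ℝ (fderiv ℝ g) :=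
    (hgc.fderiv_right (m := 1) (by norm_num)).differentiable (by norm_num)
  -- pointwise bounds from the C² norm
  have hpt : ∀ x ∈ unitCube (n-2), ‖(f - g) x‖ ≤ d ∧ ‖fderiv ℝ (f - g) x‖ ≤ d ∧
      ‖fderiv ℝ (fderiv ℝ (f - g)) x‖ ≤ d := by
    intro x hx
    have h := le_c2NormOn (f - g) hhc hx
    exact ⟨le_trans (le_max_left _ _) h,
      le_trans (le_trans (le_max_left _ _) (le_max_right _ _)) h,
      le_trans (le_trans (le_max_right _ _) (le_max_right _ _)) h⟩
  have e2 : ∀ z, fderiv ℝ (f - g) z = fderiv ℝ f z - fderiv ℝ g z :=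
    fun z => fderiv_sub (hfd z) (hgd z)
  -- d ≤ 2K
  have hd2K : d ≤ 2*K := by
    apply c2NormOn_le _ (by positivity)
    intro x hx
    have hf3 := le_c2NormOn f hfc hx
    have hg3 := le_c2NormOn g hgc hx
    have hf1 : ‖f x‖ ≤ K := le_trans (le_trans (le_max_left _ _) hf3) hfK
    have hf2' : ‖fderiv ℝ f x‖ ≤ K :=
      le_trans (le_trans (le_trans (le_max_left _ _) (le_max_right _ _)) hf3) hfK
    have hf3' : ‖fderiv ℝ (fderiv ℝ f) x‖ ≤ K :=
      le_trans (le_trans (le_trans (le_max_right _ _) (le_max_right _ _)) hf3) hfK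
    have hg1 : ‖g x‖ ≤ K := le_trans (le_trans (le_max_left _ _) hg3) hgK
    have hg2' : ‖fderiv ℝ g x‖ ≤ K :=
      le_trans (le_trans (le_trans (le_max_left _ _) (le_max_right _ _)) hg3) hgK
    have hg3' : ‖fderiv ℝ (fderiv ℝ g) x‖ ≤ K :=
      le_trans (le_trans (le_trans (le_max_right _ _) (le_max_right _ _)) hg3) hgK
    have b1 : ‖(f - g) x‖ ≤ 2*K := by
      calc ‖(f - g) x‖ = ‖f x - g x‖ := by rw [Pi.sub_apply]
        _ ≤ ‖f x‖ + ‖g x‖ := norm_sub_le _ _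
        _ ≤ 2*K := by linarith
    have b2 : ‖fderiv ℝ (f - g) x‖ ≤ 2*K := by
      rw [e2 x]
      calc ‖fderiv ℝ f x - fderiv ℝ g x‖ ≤ ‖fderiv ℝ f x‖ + ‖fderiv ℝ g x‖ := norm_sub_le _ _
        _ ≤ 2*K := by linarith
    have b3 : ‖fderiv ℝ (fderiv ℝ (f - g)) x‖ ≤ 2*K := by
      have e2' : fderiv ℝ (f - g) = fun z => fderiv ℝ f z - fderiv ℝ g z := funext e2
      rw [e2', fderiv_fun_sub (hDfd x) (hDgd x)]
      calc ‖fderiv ℝ (fderiv ℝ f) x - fderiv ℝ (fderiv ℝ g) x‖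
          ≤ ‖fderiv ℝ (fderiv ℝ f) x‖ + ‖fderiv ℝ (fderiv ℝ g) x‖ :=
            norm_sub_le (fderiv ℝ (fderiv ℝ f) x) (fderiv ℝ (fderiv ℝ g) x)
        _ ≤ 2*K := by linarith
    exact max_le b1 (max_le b2 b3)
  -- cinematic condition rephrased
  have hcinh : ∀ x ∈ unitCube (n-2), ∀ ξ : EuclideanSpace ℝ (Fin (n-2)), ‖ξ‖ = 1 →
      d ≤ K * ‖(f - g) x‖ + K * ‖fderiv ℝ (f - g) x ξ‖ := by
    intro x hx ξ hξ
    have h := hcinq x hx ξ hξ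
    have hre : ‖f x - g x‖ + ‖fderiv ℝ f x ξ - fderiv ℝ g x ξ‖
        = ‖(f - g) x‖ + ‖fderiv ℝ (f - g) x ξ‖ := by
      rw [e2 x, Pi.sub_apply, ContinuousLinearMap.sub_apply]
    rw [hre] at h
    have h' := mul_le_mul_of_nonneg_left h hK0.le
    rw [← mul_assoc, mul_inv_cancel₀ hK0.ne', one_mul] at h'
    linarith [h']
  -- Lipschitz bounds
  have hLip : ∀ x ∈ unitCube (n-2), ∀ y ∈ unitCube (n-2),
      ‖(f - g) y - (f - g) x‖ ≤ d * ‖y - x‖ :=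
    fun x hx y hy => convex_unitCube.norm_image_sub_le_of_norm_fderiv_le
      (fun z _ => hhd z) (fun z hz => (hpt z hz).2.1) hx hy
  have hDLip : ∀ x ∈ unitCube (n-2), ∀ y ∈ unitCube (n-2),
      ‖fderiv ℝ (f - g) y - fderiv ℝ (f - g) x‖ ≤ d * ‖y - x‖ :=
    fun x hx y hy => convex_unitCube.norm_image_sub_le_of_norm_fderiv_le
      (fun z _ => hDdiff z) (fun z hz => (hpt z hz).2.2) hx hy
  -- Taylor estimate
  have hTaylor : ∀ x ∈ unitCube (n-2), ∀ y ∈ unitCube (n-2),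
      ‖(f - g) y - (f - g) x - fderiv ℝ (f - g) x (y - x)‖ ≤ d * ‖y - x‖ * ‖y - x‖ := by
    intro x hx y hy
    set L := fderiv ℝ (f - g) x with hL
    have hseg : segment ℝ x y ⊆ unitCube (n-2) := convex_unitCube.segment_subset hx hy
    have hdiffφ : ∀ z ∈ segment ℝ x y, DifferentiableAt ℝ (fun z => (f - g) z - L z) z :=
      fun z _ => (hhd z).sub L.differentiableAt
    have hbound : ∀ z ∈ segment ℝ x y,
        ‖fderiv ℝ (fun z => (f - g) z - L z) z‖ ≤ d * ‖y - x‖ := by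
      intro z hz
      have hφd : fderiv ℝ (fun z => (f - g) z - L z) z = fderiv ℝ (f - g) z - L := by
        rw [fderiv_fun_sub (hhd z) L.differentiableAt, L.fderiv]
      rw [hφd]
      have h1 : ‖fderiv ℝ (f - g) z - L‖ ≤ d * ‖z - x‖ := hDLip x hx z (hseg hz)
      have h2 : ‖z - x‖ ≤ ‖y - x‖ := by
        obtain ⟨a, b, ha, hb, hab, rfl⟩ := hz
        have hzx : a • x + b • y - x = b • (y - x) := by
          have hae : a = 1 - b := by linarith
          rw [hae]; module
        rw [hzx, norm_smul, Real.norm_eq_abs, abs_of_nonneg hb]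
        nlinarith [norm_nonneg (y - x)]
      calc ‖fderiv ℝ (f - g) z - L‖ ≤ d * ‖z - x‖ := h1
        _ ≤ d * ‖y - x‖ := mul_le_mul_of_nonneg_left h2 hd0.le
    have hmvt := (convex_segment x y).norm_image_sub_le_of_norm_fderiv_le hdiffφ hbound
      (left_mem_segment ℝ x y) (right_mem_segment ℝ x y)
    calc ‖(f - g) y - (f - g) x - L (y - x)‖
        = ‖((f - g) y - L y) - ((f - g) x - L x)‖ := by rw [L.map_sub]; congr 1; abel
      _ ≤ d * ‖y - x‖ * ‖y - x‖ := by simpa using hmvt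
  -- the finset
  set Xf : Finset (EuclideanSpace ℝ (Fin (n-2))) := hXfin.toFinset with hXfdef
  set F : Finset (EuclideanSpace ℝ (Fin (n-2))) :=
    Xf.filter (fun x => ‖(f - g) x‖ < c₁ * δ) with hFdef
  have hXcard' : (Xf.card : ℝ) ≤ δ ^ (-s) := by
    rwa [hXfdef, ← Set.ncard_eq_toFinset_card X hXfin]
  refine ⟨F, ?_, ?_⟩
  · -- cardinality bound
    by_cases hcase : d ≤ B * δ
    · -- case A
      by_cases hδ1 : δ ≤ 1
      · have h1 : (F.card : ℝ) ≤ δ ^ (-s) :=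
          le_trans (Nat.cast_le.mpr (Finset.card_filter_le _ _)) hXcard'
        have hds : (0:ℝ) < δ ^ s := Real.rpow_pos_of_pos hδ s
        have hdd : (0:ℝ) < d ^ s := Real.rpow_pos_of_pos hd0 s
        have hkey : d ^ s ≤ B ^ s * δ ^ s := by
          have := Real.rpow_le_rpow hd0.le hcase hs.le
          rwa [Real.mul_rpow hB0.le hδ.le] at this
        have h2 : δ ^ (-s) ≤ B ^ s * d ^ (-s) := by
          rw [Real.rpow_neg hδ.le, Real.rpow_neg hd0.le]
          exact inv_le_mul_inv_aux hds hdd hkey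
        have e1 : B ^ s ≤ B ^ ((n:ℝ)-2) := Real.rpow_le_rpow_of_exponent_le hB1 hsn
        have e2' : (1:ℝ) ≤ δ ^ (-ε) := by
          have := Real.rpow_le_rpow_of_exponent_ge hδ hδ1 (by linarith : -ε ≤ 0)
          rwa [Real.rpow_zero] at this
        have hddneg : (0:ℝ) < d ^ (-s) := Real.rpow_pos_of_pos hd0 (-s)
        calc (F.card : ℝ) ≤ δ ^ (-s) := h1
          _ ≤ B ^ s * d ^ (-s) := h2
          _ = 1 * B ^ s * 1 * d ^ (-s) := by ring
          _ ≤ ((T.card : ℝ) + 1) * B ^ ((n:ℝ)-2) * δ ^ (-ε) * d ^ (-s) := by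
              have hT0 : (0:ℝ) ≤ (T.card : ℝ) := Nat.cast_nonneg _
              gcongr <;> first
                | linarith
                | exact e1
                | exact e2'
      · -- δ > 1 : X is empty
        push_neg at hδ1
        have hXempty : X.ncard = 0 := by
          by_contra hne
          have h1 : 1 ≤ X.ncard := Nat.one_le_iff_ne_zero.mpr hne
          have h2 : (1:ℝ) ≤ δ ^ (-s) := le_trans (by exact_mod_cast h1) hXcard
          have h3 : δ ^ (-s) < 1 :=
            Real.rpow_lt_one_of_one_lt_of_neg hδ1 (by linarith)
          linarith
        have hF0 : F.card = 0 := by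
          have : Xf.card = 0 := by
            rw [hXfdef, ← Set.ncard_eq_toFinset_card X hXfin]; exact hXempty
          have hFX : F.card ≤ Xf.card := by
            rw [hFdef]; exact Finset.card_filter_le _ _
          omega
        rw [hF0]
        push_cast
        positivity
    · -- case B
      push_neg at hcase
      set r₀ : ℝ := 8*K*c₁*δ/d with hr₀def
      have hr₀0 : 0 < r₀ := by positivity
      have hr₀δ : δ ≤ r₀ := by
        have h1 : 8*K*c₁*δ/(2*K) ≤ r₀ := by
          apply div_le_div_of_nonneg_left (by positivity) hd0 hd2K
        have h2 : 8*K*c₁*δ/(2*K) = 4*c₁*δ := by field_simp; ring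
        nlinarith [h1, h2]
      -- key separation estimate
      have hkey : ∀ x ∈ X, ∀ y ∈ X, ‖(f - g) x‖ < c₁*δ → ‖(f - g) y‖ < c₁*δ →
          dist x y < 1/(4*K) → dist x y ≤ r₀ := by
        intro x hxX y hyX hx1 hy1 hxy
        rcases eq_or_ne y x with rfl | hne
        · simp [hr₀0.le]
        have hxc := hXcube hxX
        have hyc := hXcube hyX
        set u := y - x with hu
        have hu0 : u ≠ 0 := sub_ne_zero.mpr hne
        set a : ℝ := ‖u‖ with ha
        have ha0 : 0 < a := norm_pos_iff.mpr hu0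
        have hadist : dist x y = a := by rw [dist_comm, dist_eq_norm]
        set ξ : EuclideanSpace ℝ (Fin (n-2)) := a⁻¹ • u with hξ
        have hξ1 : ‖ξ‖ = 1 := norm_smul_inv_norm (𝕜 := ℝ) hu0
        have hcin1 := hcinh x hxc ξ hξ1
        have heq : ‖fderiv ℝ (f - g) x u‖ = a * ‖fderiv ℝ (f - g) x ξ‖ := by
          rw [hξ, ContinuousLinearMap.map_smul, norm_smul, Real.norm_eq_abs, abs_inv,
            abs_of_nonneg (norm_nonneg u)]
          field_simp
          rfl
        have ht1 : ‖fderiv ℝ (f - g) x u‖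
            ≤ ‖(f - g) y - (f - g) x‖ + d * a * a := by
          calc ‖fderiv ℝ (f - g) x u‖
              = ‖((f - g) y - (f - g) x) - ((f - g) y - (f - g) x - fderiv ℝ (f - g) x u)‖ := by
                congr 1; abel
            _ ≤ ‖(f - g) y - (f - g) x‖ + ‖(f - g) y - (f - g) x - fderiv ℝ (f - g) x u‖ :=
                norm_sub_le _ _
            _ ≤ ‖(f - g) y - (f - g) x‖ + d * a * a := by
                have := hTaylor x hxc y hyc
                linarith [this]
        have ht2 : ‖(f - g) y - (f - g) x‖ ≤ ‖(f - g) y‖ + ‖(f - g) x‖ := norm_sub_le _ _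
        have hn2 : a * ‖fderiv ℝ (f - g) x ξ‖ ≤ 2*(c₁*δ) + d * a * a := by
          rw [← heq]; linarith
        have hn5 : 4*K*a ≤ 1 := by
          have : a < 1/(4*K) := by rwa [hadist] at hxy
          rw [lt_div_iff₀ (by positivity)] at this
          nlinarith
        rw [hr₀def]
        have hgoal : a * d ≤ 8*K*c₁*δ := by
          have hmul1 : a * d ≤ a * (K * ‖(f - g) x‖ + K * ‖fderiv ℝ (f - g) x ξ‖) :=
            mul_le_mul_of_nonneg_left hcin1 ha0.le
          have hmul2 : K * (a * ‖fderiv ℝ (f - g) x ξ‖) ≤ K * (2*(c₁*δ) + d * a * a) :=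
            mul_le_mul_of_nonneg_left hn2 hK0.le
          have hpos1 : (0:ℝ) ≤ d * a := by positivity
          have hhx0 : (0:ℝ) ≤ ‖(f - g) x‖ := norm_nonneg _
          nlinarith [hmul1, hmul2, hpos1, hn5, hx1, hδ, hK0, ha0,
            mul_nonneg (mul_nonneg hd0.le ha0.le) ha0.le,
            mul_le_mul_of_nonneg_left hx1.le (mul_nonneg hK0.le ha0.le)]
        calc dist x y = a := hadist
          _ ≤ 8*K*c₁*δ/d := by rw [le_div_iff₀ hd0]; exact hgoal
      -- covering F by the pieces of the cover
      have hcover : F ⊆ T.biUnion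
          (fun y => F.filter (fun x => x ∈ Metric.ball y (1/(8*K)))) := by
        intro x hxF
        have hxX : x ∈ X := hXfin.mem_toFinset.mp (Finset.mem_filter.mp hxF).1
        obtain ⟨y, hy, hxy⟩ := Set.mem_iUnion₂.mp (ht0 (hXcube hxX))
        exact Finset.mem_biUnion.mpr ⟨y, ht0fin.mem_toFinset.mpr hy,
          Finset.mem_filter.mpr ⟨hxF, hxy⟩⟩
      have hcard1 : F.card ≤ ∑ y ∈ T, (F.filter (fun x => x ∈ Metric.ball y (1/(8*K)))).card :=
        le_trans (Finset.card_le_card hcover) (Finset.card_biUnion_le)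
      have hpiece : ∀ y ∈ T, ((F.filter (fun x => x ∈ Metric.ball y (1/(8*K)))).card : ℝ)
          ≤ δ ^ (-ε) * r₀ ^ s * X.ncard := by
        intro y _
        set P := F.filter (fun x => x ∈ Metric.ball y (1/(8*K))) with hP
        rcases P.eq_empty_or_nonempty with hPe | ⟨z, hz⟩
        · rw [hPe]; simp; positivity
        · have hzmem := Finset.mem_filter.mp hz
          have hzF := Finset.mem_filter.mp hzmem.1
          have hzX : z ∈ X := hXfin.mem_toFinset.mp hzF.1
          have hPsub : (P : Set _) ⊆ X ∩ Metric.closedBall z r₀ := by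
            intro w hw
            have hwmem := Finset.mem_filter.mp hw
            have hwF := Finset.mem_filter.mp hwmem.1
            have hwX : w ∈ X := hXfin.mem_toFinset.mp hwF.1
            have hdwz : dist w z < 1/(4*K) := by
              have h1 : dist w y < 1/(8*K) := Metric.mem_ball.mp hwmem.2
              have h2 : dist z y < 1/(8*K) := Metric.mem_ball.mp hzmem.2
              calc dist w z ≤ dist w y + dist y z := dist_triangle _ _ _
                _ = dist w y + dist z y := by rw [dist_comm y z]
                _ < 1/(8*K) + 1/(8*K) := by linarith
                _ = 1/(4*K) := by field_simp; ring
            have := hkey w hwX z hzX hwF.2 hzF.2 hdwz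
            exact ⟨hwX, Metric.mem_closedBall.mpr this⟩
          have hdelta := hXds z r₀ hr₀δ
          have hsub2 : (P.card : ℝ) ≤ ((X ∩ Metric.closedBall z r₀).ncard : ℝ) := by
            have h1 : (P : Set _).ncard ≤ (X ∩ Metric.closedBall z r₀).ncard :=
              Set.ncard_le_ncard hPsub (hXfin.inter_of_left _)
            rw [Set.ncard_coe_finset] at h1
            exact_mod_cast h1
          exact le_trans hsub2 hdelta
      have hr₀s : r₀ ^ s * δ ^ (-s) = (8*K*c₁) ^ s * d ^ (-s) := by
        have hds : (δ:ℝ) ^ s ≠ 0 := (Real.rpow_pos_of_pos hδ s).ne'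
        have hdd : (d:ℝ) ^ s ≠ 0 := (Real.rpow_pos_of_pos hd0 s).ne'
        have : r₀ = (8*K*c₁) * (δ / d) := by rw [hr₀def]; ring
        rw [this, Real.mul_rpow (by positivity) (by positivity),
          Real.div_rpow hδ.le hd0.le, Real.rpow_neg hδ.le, Real.rpow_neg hd0.le]
        field_simp
      have h8B : (8*K*c₁) ^ s ≤ B ^ ((n:ℝ)-2) := by
        calc (8*K*c₁) ^ s ≤ B ^ s := by
              apply Real.rpow_le_rpow (by positivity) (by nlinarith) hs.le
          _ ≤ B ^ ((n:ℝ)-2) := Real.rpow_le_rpow_of_exponent_le hB1 hsn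
      have hdpe : (0:ℝ) < δ ^ (-ε) := Real.rpow_pos_of_pos hδ _
      have hddneg : (0:ℝ) < d ^ (-s) := Real.rpow_pos_of_pos hd0 _
      calc (F.card : ℝ)
          ≤ ∑ y ∈ T, ((F.filter (fun x => x ∈ Metric.ball y (1/(8*K)))).card : ℝ) := by
            exact_mod_cast hcard1
        _ ≤ ∑ _y ∈ T, (δ ^ (-ε) * r₀ ^ s * (X.ncard : ℝ)) := Finset.sum_le_sum hpiece
        _ = (T.card : ℝ) * (δ ^ (-ε) * r₀ ^ s * (X.ncard : ℝ)) := by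
            rw [Finset.sum_const, nsmul_eq_mul]
        _ ≤ (T.card : ℝ) * (δ ^ (-ε) * r₀ ^ s * δ ^ (-s)) := by
            gcongr
        _ = (T.card : ℝ) * (8*K*c₁) ^ s * δ ^ (-ε) * d ^ (-s) := by
            rw [show δ ^ (-ε) * r₀ ^ s * δ ^ (-s) = δ ^ (-ε) * (r₀ ^ s * δ ^ (-s)) from by ring,
              hr₀s]
            ring
        _ ≤ ((T.card : ℝ) + 1) * B ^ ((n:ℝ)-2) * δ ^ (-ε) * d ^ (-s) := by
            gcongr
            linarith
  · -- covering
    rintro p ⟨⟨x, hxX, hdist⟩, hpcube, hpfg⟩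
    have hxF : x ∈ F := by
      rw [hFdef, Finset.mem_filter]
      refine ⟨hXfin.mem_toFinset.mpr hxX, ?_⟩
      have hLxp : ‖(f - g) x - (f - g) p‖ ≤ d * ‖x - p‖ := hLip p hpcube x (hXcube hxX)
      have h1 : ‖(f - g) p‖ < 2 * δ := by
        rw [Pi.sub_apply]; exact hpfg
      have h2 : ‖x - p‖ < δ := by rw [← dist_eq_norm, dist_comm]; exact hdist
      calc ‖(f - g) x‖ = ‖(f - g) p + ((f - g) x - (f - g) p)‖ := by congr 1; abel
        _ ≤ ‖(f - g) p‖ + ‖(f - g) x - (f - g) p‖ := norm_add_le _ _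
        _ < 2*δ + d * δ := by
            have : d * ‖x - p‖ ≤ d * δ := mul_le_mul_of_nonneg_left h2.le hd0.le
            linarith
        _ ≤ c₁ * δ := by nlinarith
    exact Set.mem_iUnion₂.mpr ⟨x, hxF, Metric.mem_ball.mpr hdist⟩
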